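/- For every real η > 0 one has (η − sin η)/(η − sin η · cos η) > 1/4. -/
import Mathlib

open Real

lemma cos_lt_one_aux {x : ℝ} (h0 : 0 < x) (h2 : x < 2) : Real.cos x < 1 := by
  have hy : 0 < Real.sin (x / 2) :=
    Real.sin_pos_of_pos_of_lt_pi (by linarith) (by nlinarith [Real.pi_gt_three])
  have hc := Real.cos_two_mul (x / 2)
  rw [show 2 * (x / 2) = x by ring] at hc
  nlinarith [Real.sin_sq_add_cos_sq (x / 2)]

lemma key (η : ℝ) (hη : 0 < η) :
    3 * η - 4 * Real.sin η + Real.sin η * Real.cos η > 0 := by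
  rcases le_or_gt η 2 with h2 | h2
  · set f : ℝ → ℝ := fun x => 3 * x - 4 * Real.sin x + Real.sin x * Real.cos x with hf
    have hderiv : ∀ x : ℝ, HasDerivAt f (2 * (1 - Real.cos x) ^ 2) x := by
      intro x
      have h : HasDerivAt f (3 - 4 * Real.cos x +
          (Real.cos x * Real.cos x + Real.sin x * (-Real.sin x))) x := by
        exact (((hasDerivAt_id x).const_mul 3).sub ((Real.hasDerivAt_sin x).const_mul 4)).add
          ((Real.hasDerivAt_sin x).mul (Real.hasDerivAt_cos x)) |>.congr_deriv (by ring)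
      convert h using 1
      nlinarith [Real.sin_sq_add_cos_sq x]
    have hmono : StrictMonoOn f (Set.Icc 0 2) := by
      apply strictMonoOn_of_deriv_pos (convex_Icc 0 2)
      · exact fun x _ => ((hderiv x).continuousAt).continuousWithinAt
      · intro x hx
        rw [interior_Icc] at hx
        rw [(hderiv x).deriv]
        have := cos_lt_one_aux hx.1 hx.2
        nlinarith
    have := hmono (Set.mem_Icc.mpr ⟨le_refl 0, by norm_num⟩)
      (Set.mem_Icc.mpr ⟨hη.le, h2⟩) hη
    simpa [hf] using this
  · have h := Real.neg_one_le_sin (2 * η)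
    rw [Real.sin_two_mul] at h
    nlinarith [Real.sin_le_one η]

theorem chord_arc_ratio_gt_quarter (η : ℝ) (hη : 0 < η) :
    (η - Real.sin η) / (η - Real.sin η * Real.cos η) > 1 / 4 := by
  have hden : 0 < η - Real.sin η * Real.cos η := by
    have h := Real.sin_lt (by linarith : (0:ℝ) < 2 * η)
    have : Real.sin (2 * η) = 2 * Real.sin η * Real.cos η := Real.sin_two_mul η
    linarith
  rw [gt_iff_lt, div_lt_div_iff₀ (by norm_num) hden]
  have := key η hη
  linarith
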